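/- Let n ≥ 1, 1 ≤ k ≤ n and 1 ≤ d ≤ min(k, n+1−k), and let x ∈ S_{n+1} be the block-swap permutation. Let v ∈ S_{n+1} satisfy v(j) < v(j+1) for all j ∈ {1,…,n} with j ≠ k (i.e. v is a minimal length coset representative for the Grassmannian Gr(k, n+1)). If inv(v∘x) = inv(v) − d², then v∘x satisfies (v∘x)(j) < (v∘x)(j+1) for all j ∈ {1,…,n} with j ∉ {k−d, k+d} (i.e. v∘x is a minimal length coset representative for the two-step flag variety Fl(k−d, k+d; n+1)). -/

import Mathlib

/-- The inversion number of a permutation `w` of `{1, …, n+1}` (modelled as a permutation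
of `ℕ` supported on `{1, …, n+1}`): the number of pairs `1 ≤ i < j ≤ n+1` with
`w(i) > w(j)`.  It equals the Coxeter length of `w` in `S_{n+1}`. -/
def invNum (n : ℕ) (w : Equiv.Perm ℕ) : ℕ :=
  ((Finset.Icc 1 (n + 1) ×ˢ Finset.Icc 1 (n + 1)).filter
    (fun p => p.1 < p.2 ∧ w p.2 < w p.1)).card

/-- **Lemma 2.15 (`lemmafortwostepele`).**
If `v` is a minimal length coset representative for the Grassmannian `Gr(k, n+1)`
(i.e. `v(j) < v(j+1)` for all `j ≠ k`) and `inv(v∘x) = inv(v) − d²` for the block-swap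
permutation `x`, then `v∘x` is a minimal length coset representative for the two-step
flag variety `Fl(k−d, k+d; n+1)` (i.e. `(v∘x)(j) < (v∘x)(j+1)` for `j ∉ {k−d, k+d}`). -/
theorem blockSwap_two_step_representative (n k d : ℕ) (hn : 1 ≤ n) (hk1 : 1 ≤ k)
    (hkn : k ≤ n) (hd1 : 1 ≤ d) (hdk : d ≤ k) (hdn : d ≤ n + 1 - k)
    (x : Equiv.Perm ℕ)
    (hx : ∀ i, x i = if k - d + 1 ≤ i ∧ i ≤ k then i + d
      else if k + 1 ≤ i ∧ i ≤ k + d then i - d else i)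
    (v : Equiv.Perm ℕ)
    (hvfix : ∀ i, i ∉ Finset.Icc 1 (n + 1) → v i = i)
    (hvgrass : ∀ j, 1 ≤ j → j ≤ n → j ≠ k → v j < v (j + 1))
    (hlen : (invNum n (v * x) : ℤ) = (invNum n v : ℤ) - d ^ 2) :
    ∀ j, 1 ≤ j → j ≤ n → j ≠ k - d → j ≠ k + d → (v * x) j < (v * x) (j + 1) := by
  classical
  have hkd : k + d ≤ n + 1 := by omega
  have hxinv : ∀ i, x (x i) = i := by
    intro i
    rw [hx i, hx]
    split_ifs <;> omega
  have hxmem : ∀ i, 1 ≤ i → i ≤ n + 1 → 1 ≤ x i ∧ x i ≤ n + 1 := by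
    intro i h1 h2; rw [hx i]; split_ifs <;> omega
  have hxord : ∀ i j : ℕ, i < j →
      ¬(k - d + 1 ≤ i ∧ i ≤ k ∧ k + 1 ≤ j ∧ j ≤ k + d) → x i < x j := by
    intro i j hij hc; rw [hx i, hx j]; split_ifs <;> omega
  -- KEY: v (k+d) < v (k-d+1)
  have key : v (k + d) < v (k - d + 1) := by
    by_contra hcon
    push_neg at hcon
    have hne : k - d + 1 ≠ k + d := by omega
    have h0 : v (k - d + 1) < v (k + d) :=
      lt_of_le_of_ne hcon (fun h => hne (v.injective h))
    set P := Finset.Icc 1 (n + 1) ×ˢ Finset.Icc 1 (n + 1) with hP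
    set A := P.filter (fun p => p.1 < p.2 ∧ v p.2 < v p.1) with hA
    set B := P.filter (fun p => p.1 < p.2 ∧ (v * x) p.2 < (v * x) p.1) with hB
    have hAcard : A.card = invNum n v := rfl
    have hBcard : B.card = invNum n (v * x) := rfl
    set c : ℕ × ℕ → Prop :=
      fun p => k - d + 1 ≤ p.1 ∧ p.1 ≤ k ∧ k + 1 ≤ p.2 ∧ p.2 ≤ k + d with hc
    have hsplit : (A.filter c).card + (A.filter (fun p => ¬ c p)).card = A.card :=
      Finset.card_filter_add_card_filter_not _
    have h1 : (A.filter (fun p => ¬ c p)).card ≤ B.card := by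
      apply Finset.card_le_card_of_injOn (fun p => (x p.1, x p.2))
      · intro p hp
        simp only [hA, hB, hc, Finset.mem_filter, hP, Finset.mem_product,
          Finset.mem_Icc, Finset.mem_coe] at hp ⊢
        obtain ⟨⟨⟨⟨hi1, hi2⟩, hj1, hj2⟩, hij, hv⟩, hnc⟩ := hp
        refine ⟨⟨⟨(hxmem p.1 hi1 hi2).1, (hxmem p.1 hi1 hi2).2⟩,
          (hxmem p.2 hj1 hj2).1, (hxmem p.2 hj1 hj2).2⟩,
          hxord p.1 p.2 hij (by tauto), ?_⟩
        show v (x (x p.2)) < v (x (x p.1))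
        rw [hxinv, hxinv]; exact hv
      · intro p _ q _ h
        have e1 : x p.1 = x q.1 := congrArg Prod.fst h
        have e2 : x p.2 = x q.2 := congrArg Prod.snd h
        exact Prod.ext (x.injective e1) (x.injective e2)
    have h2 : (A.filter c).card ≤ d * d - 1 := by
      have hsub : A.filter c ⊆
          (Finset.Icc (k - d + 1) k ×ˢ Finset.Icc (k + 1) (k + d)).erase (k - d + 1, k + d) := by
        intro p hp
        simp only [hA, hc, Finset.mem_filter, hP, Finset.mem_product, Finset.mem_Icc] at hp
        obtain ⟨⟨-, hij, hv⟩, hc1, hc2, hc3, hc4⟩ := hp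
        rw [Finset.mem_erase]
        constructor
        · intro h
          rw [h] at hv
          simp only at hv
          exact absurd hv (not_lt.mpr (le_of_lt h0))
        · simp only [Finset.mem_product, Finset.mem_Icc]; omega
      have c1 : (Finset.Icc (k - d + 1) k).card = d := by rw [Nat.card_Icc]; omega
      have c2 : (Finset.Icc (k + 1) (k + d)).card = d := by rw [Nat.card_Icc]; omega
      have hmem : (k - d + 1, k + d) ∈
          Finset.Icc (k - d + 1) k ×ˢ Finset.Icc (k + 1) (k + d) := by
        simp only [Finset.mem_product, Finset.mem_Icc]; omega
      calc (A.filter c).card ≤ _ := Finset.card_le_card hsub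
        _ = d * d - 1 := by
          rw [Finset.card_erase_of_mem hmem, Finset.card_product, c1, c2]
    have hm1 : 1 ≤ d * d := Nat.one_le_iff_ne_zero.mpr (by positivity)
    have hsq : ((d : ℤ)) ^ 2 = ((d * d : ℕ) : ℤ) := by push_cast; ring
    rw [hsq] at hlen
    omega
  -- main case analysis
  intro j hj1 hj2 hjk1 hjk2
  show v (x j) < v (x (j + 1))
  rw [hx j, hx (j + 1)]
  split_ifs with h1 h2 h3 h4 h5 h6 h7 h8
  · -- both in first block
    have e : j + 1 + d = j + d + 1 := by omega
    rw [e]; exact hvgrass (j + d) (by omega) (by omega) (by omega)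
  · -- j in first block, j+1 in second: j = k
    have e1 : j + d = k + d := by omega
    have e2 : j + 1 - d = k - d + 1 := by omega
    rw [e1, e2]; exact key
  · omega
  · omega
  · -- both in second block
    have e : j + 1 - d = j - d + 1 := by omega
    rw [e]; exact hvgrass (j - d) (by omega) (by omega) (by omega)
  · omega
  · omega
  · omega
  · exact hvgrass j hj1 hj2 (by omega)
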